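/- Let s, s₁, s₂ solve ∂_t s = (1/2)(∇(s·x) + ∇‖s‖²) as gradient fields with initial condition s(·,0) = (1+ω)s₁(·,0) − ω s₂(·,0). If their characteristic lines x(t), x₁(t), x₂(t) all start at the same point x₀ and satisfy the characteristic-line relations, then s(x(t),t) = (1+ω) s₁(x₁(t),t) − ω s₂(x₂(t),t), the lines satisfy (1+ω)x₁(t) − ω x₂(t) = x(t), and defining Δx by x₁(t) = x(t) + ω Δx, x₂(t) = x(t) + (1+ω)Δx, one has Δx = (s₁(x₁(t),t) − s₂(x₂(t),t))(1 − e^{−t}). -/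
import Mathlib


/-- With s(·,0) = (1+ω)s₁(·,0) − ω s₂(·,0) and characteristic lines
x(t), x₁(t), x₂(t) of s, s₁, s₂ all starting at x₀, one has
s(x(t),t) = (1+ω)s₁(x₁(t),t) − ω s₂(x₂(t),t), (1+ω)x₁(t) − ω x₂(t) = x(t), and
if x₁(t) = x(t) + ωΔx and x₂(t) = x(t) + (1+ω)Δx then
Δx = (s₁(x₁(t),t) − s₂(x₂(t),t))(1 − e^{−t}). -/
theorem stmt_9 {n : ℕ} (ω : ℝ)
    (s s₁ s₂ : (Fin n → ℝ) → ℝ → Fin n → ℝ)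
    (x x₁ x₂ : ℝ → Fin n → ℝ) (x₀ : Fin n → ℝ)
    (h0 : x 0 = x₀) (h10 : x₁ 0 = x₀) (h20 : x₂ 0 = x₀)
    (hinit : ∀ y, s y 0 = (1 + ω) • s₁ y 0 - ω • s₂ y 0)
    (hline : ∀ t,
      x t = Real.exp (-t / 2) • x₀ - (1 - Real.exp (-t)) • s (x t) t
        ∧ s (x t) t = Real.exp (t / 2) • s x₀ 0)
    (hline₁ : ∀ t,
      x₁ t = Real.exp (-t / 2) • x₀ - (1 - Real.exp (-t)) • s₁ (x₁ t) t
        ∧ s₁ (x₁ t) t = Real.exp (t / 2) • s₁ x₀ 0)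
    (hline₂ : ∀ t,
      x₂ t = Real.exp (-t / 2) • x₀ - (1 - Real.exp (-t)) • s₂ (x₂ t) t
        ∧ s₂ (x₂ t) t = Real.exp (t / 2) • s₂ x₀ 0) :
    ∀ t,
      s (x t) t = (1 + ω) • s₁ (x₁ t) t - ω • s₂ (x₂ t) t
      ∧ (1 + ω) • x₁ t - ω • x₂ t = x t
      ∧ ∀ Δx : Fin n → ℝ,
          x₁ t = x t + ω • Δx → x₂ t = x t + (1 + ω) • Δx →
          Δx = (1 - Real.exp (-t)) • (s₁ (x₁ t) t - s₂ (x₂ t) t) := by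
  intro t
  obtain ⟨hx, hs⟩ := hline t
  obtain ⟨hx1, hs1⟩ := hline₁ t
  obtain ⟨hx2, hs2⟩ := hline₂ t
  have hkey : s (x t) t = (1 + ω) • s₁ (x₁ t) t - ω • s₂ (x₂ t) t := by
    rw [hinit x₀] at hs
    linear_combination (norm := module) hs - (1+ω) • hs1 + ω • hs2
  refine ⟨hkey, ?_, ?_⟩
  · linear_combination (norm := module) (1+ω) • hx1 - ω • hx2 - hx + (1 - Real.exp (-t)) • hkey
  · intro Δx h1 h2
    have hdiff : x₁ t - x₂ t = (1 - Real.exp (-t)) • (s₂ (x₂ t) t - s₁ (x₁ t) t) := by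
      linear_combination (norm := module) hx1 - hx2
    have hdiff2 : x₁ t - x₂ t = -Δx := by
      linear_combination (norm := module) h1 - h2
    have h3 := hdiff2.symm.trans hdiff
    linear_combination (norm := module) -h3
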